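/- Let μ ∈ ℝ, β > 0, α ∈ [0,1], m ∈ ℝ, s > 0 and λ ∈ ℝ, and define the global-aware EDAIN coordinate transformation T : ℝ → ℝ by T(x) = f_YJ^λ((h_1(x) − m)/s), where h_1(x) = α·(β·tanh((x − μ)/β) + μ) + (1 − α)·x. Then T is strictly monotonically increasing on ℝ: for all x, x' ∈ ℝ, x < x' implies T(x) < T(x'). Hence the global-aware EDAIN transformation preserves the relative ordering of observations in each coordinate. -/
import Mathlib


/-- The Yeo-Johnson transformation with parameter `l`. Real powers are `Real.rpow`. -/
noncomputable def yeoJohnson (l x : ℝ) : ℝ :=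
  if 0 ≤ x then
    if l ≠ 0 then ((x + 1) ^ l - 1) / l else Real.log (x + 1)
  else
    if l ≠ 2 then ((1 - x) ^ (2 - l) - 1) / (l - 2) else -Real.log (1 - x)

/-- The outlier mitigation map: the convex combination, with weight `α`, of the
smoothed winsorization `β·tanh((x − μ)/β) + μ` and the identity. -/
noncomputable def outlierMitigation (μ β α x : ℝ) : ℝ :=
  α * (β * Real.tanh ((x - μ) / β) + μ) + (1 - α) * x

/-- The global-aware EDAIN coordinate transformation: outlier mitigation,
then shift by `m`, scaling by `1/s`, and the Yeo-Johnson power transform. -/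
noncomputable def edainGlobal (μ β α m s l x : ℝ) : ℝ :=
  yeoJohnson l ((outlierMitigation μ β α x - m) / s)

lemma tanh_strictMono : StrictMono Real.tanh := by
  intro x y h
  rw [Real.tanh_eq_sinh_div_cosh, Real.tanh_eq_sinh_div_cosh,
    div_lt_div_iff₀ (Real.cosh_pos x) (Real.cosh_pos y)]
  have h0 : Real.sinh (x - y) < 0 := Real.sinh_neg_iff.2 (by linarith)
  rw [Real.sinh_sub] at h0; linarith

lemma yJ_mono_nonneg {l x y : ℝ} (hx : 0 ≤ x) (hxy : x < y) :
    yeoJohnson l x < yeoJohnson l y := by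
  have hy : (0:ℝ) ≤ y := le_trans hx hxy.le
  have hx1 : (0:ℝ) < x + 1 := by linarith
  have hxy1 : x + 1 < y + 1 := by linarith
  unfold yeoJohnson
  rw [if_pos hx, if_pos hy]
  by_cases hl : l = 0
  · simp only [hl, ne_eq, not_true_eq_false, if_false]
    exact Real.log_lt_log hx1 hxy1
  · rw [if_pos hl, if_pos hl]
    rcases lt_or_gt_of_ne hl with hneg | hpos
    · have h := Real.rpow_lt_rpow_of_neg hx1 hxy1 hneg
      rw [div_eq_mul_inv, div_eq_mul_inv]
      exact mul_lt_mul_of_neg_right (by linarith) (inv_neg''.2 hneg)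
    · have h := Real.rpow_lt_rpow hx1.le hxy1 hpos
      rw [div_eq_mul_inv, div_eq_mul_inv]
      exact mul_lt_mul_of_pos_right (by linarith) (inv_pos.2 hpos)

lemma yJ_mono_neg {l x y : ℝ} (hy : y < 0) (hxy : x < y) :
    yeoJohnson l x < yeoJohnson l y := by
  have hx : x < 0 := lt_trans hxy hy
  have hy1 : (1:ℝ) < 1 - y := by linarith
  have hxy1 : 1 - y < 1 - x := by linarith
  unfold yeoJohnson
  rw [if_neg (not_le.2 hx), if_neg (not_le.2 hy)]
  by_cases hl : l = 2
  · simp only [hl, ne_eq, not_true_eq_false, if_false]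
    have := Real.log_lt_log (by linarith) hxy1
    linarith
  · rw [if_pos hl, if_pos hl]
    have hl2 : l - 2 ≠ 0 := sub_ne_zero.2 hl
    rcases lt_or_gt_of_ne hl2 with hneg | hpos
    · -- l < 2, so 2 - l > 0, exponent positive, base increases ⇒ rpow increases,
      -- divided by negative (l-2) flips: value at larger base is smaller... careful
      have h := Real.rpow_lt_rpow (by linarith : (0:ℝ) ≤ 1 - y) hxy1 (by linarith : 0 < 2 - l)
      rw [div_eq_mul_inv, div_eq_mul_inv]
      exact mul_lt_mul_of_neg_right (by linarith) (inv_neg''.2 hneg)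
    · have h := Real.rpow_lt_rpow_of_neg (by linarith : (0:ℝ) < 1 - y) hxy1
        (by linarith : 2 - l < 0)
      rw [div_eq_mul_inv, div_eq_mul_inv]
      exact mul_lt_mul_of_pos_right (by linarith) (inv_pos.2 hpos)

lemma yJ_neg_lt_zero {l x : ℝ} (hx : x < 0) : yeoJohnson l x < 0 := by
  have hx1 : (1:ℝ) < 1 - x := by linarith
  unfold yeoJohnson
  rw [if_neg (not_le.2 hx)]
  by_cases hl : l = 2
  · simp only [hl, ne_eq, not_true_eq_false, if_false]
    have := Real.log_pos hx1
    linarith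
  · rw [if_pos hl]
    have hl2 : l - 2 ≠ 0 := sub_ne_zero.2 hl
    rcases lt_or_gt_of_ne hl2 with hneg | hpos
    · have h : (1:ℝ) < (1 - x) ^ (2 - l) :=
        Real.one_lt_rpow_iff_of_pos (by linarith) |>.2 (Or.inl ⟨hx1, by linarith⟩)
      exact div_neg_of_pos_of_neg (by linarith) hneg
    · have h : (1 - x) ^ (2 - l) < 1 :=
        Real.rpow_lt_one_of_one_lt_of_neg hx1 (by linarith)
      exact div_neg_of_neg_of_pos (by linarith) hpos

lemma yJ_nonneg {l x : ℝ} (hx : 0 ≤ x) : 0 ≤ yeoJohnson l x := by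
  have h0 : yeoJohnson l 0 = 0 := by
    unfold yeoJohnson
    simp [Real.one_rpow]
  rcases eq_or_lt_of_le hx with h | h
  · rw [← h, h0]
  · rw [← h0]; exact (yJ_mono_nonneg le_rfl h).le

lemma yJ_strictMono (l : ℝ) : StrictMono (yeoJohnson l) := by
  intro x y hxy
  rcases le_or_gt 0 x with hx | hx
  · exact yJ_mono_nonneg hx hxy
  · rcases lt_or_ge y 0 with hy | hy
    · exact yJ_mono_neg hy hxy
    · exact lt_of_lt_of_le (yJ_neg_lt_zero hx) (yJ_nonneg hy)

lemma om_strictMono (μ β α : ℝ) (hβ : 0 < β) (hα : α ∈ Set.Icc (0 : ℝ) 1) :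
    StrictMono (outlierMitigation μ β α) := by
  obtain ⟨hα0, hα1⟩ := hα
  intro x y hxy
  unfold outlierMitigation
  have ht : Real.tanh ((x - μ) / β) < Real.tanh ((y - μ) / β) :=
    tanh_strictMono (by apply div_lt_div_of_pos_right (by linarith) hβ)
  rcases eq_or_lt_of_le hα0 with h0 | h0
  · rw [← h0]; simpa using hxy
  · have h1 : α * (β * Real.tanh ((x - μ) / β) + μ) < α * (β * Real.tanh ((y - μ) / β) + μ) := by
      apply mul_lt_mul_of_pos_left _ h0
      nlinarith
    have h2 : (1 - α) * x ≤ (1 - α) * y := by nlinarith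
    linarith

/-- For `μ ∈ ℝ`, `β > 0`, `α ∈ [0,1]`, `m ∈ ℝ`, `s > 0` and `λ ∈ ℝ`, the
global-aware EDAIN coordinate transformation is strictly monotonically
increasing on `ℝ`: `x < x'` implies `T(x) < T(x')`. Hence it preserves the
relative ordering of the observations in each coordinate. -/
theorem stmt_12 (μ β α m s l : ℝ) (hβ : 0 < β) (hα : α ∈ Set.Icc (0 : ℝ) 1)
    (hs : 0 < s) :
    StrictMono (edainGlobal μ β α m s l) ∧
    (∀ x x' : ℝ, x < x' → edainGlobal μ β α m s l x < edainGlobal μ β α m s l x') := by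
  have hmono : StrictMono (edainGlobal μ β α m s l) := by
    intro x y hxy
    unfold edainGlobal
    apply yJ_strictMono
    apply div_lt_div_of_pos_right _ hs
    have := om_strictMono μ β α hβ hα hxy
    linarith
  exact ⟨hmono, fun x x' h => hmono h⟩
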